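/- Let (G,D) be a standard pair with |D| = 1. Then G admits a strong orientation G⃗ with diam(G⃗) ≤ 4. -/

import Mathlib

open SimpleGraph

variable {V : Type*}

/-- A graph is bridgeless if no edge is a bridge. -/
def IsBridgeless (G : SimpleGraph V) : Prop := ∀ e : Sym2 V, ¬ G.IsBridge e

/-- `R` is an orientation of `G`: every arc of `R` is an edge of `G`, every edge of `G`
receives exactly one direction. -/
def IsOrientation (G : SimpleGraph V) (R : V → V → Prop) : Prop :=
  (∀ u v, R u v → G.Adj u v) ∧ (∀ u v, G.Adj u v → (R u v ∨ R v u)) ∧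
  (∀ u v, R u v → ¬ R v u)

/-- There is a directed walk of length `n` from `u` to `v` along the relation `R`. -/
def HasDirWalk (R : V → V → Prop) (u v : V) (n : ℕ) : Prop :=
  ∃ f : Fin (n + 1) → V, f 0 = u ∧ f (Fin.last n) = v ∧
    ∀ i : Fin n, R (f i.castSucc) (f i.succ)

/-- `R` is strongly connected. -/
def IsStrong (R : V → V → Prop) : Prop := ∀ u v : V, ∃ n, HasDirWalk R u v n

/-- `R` is strongly connected within the vertex set `W`. -/
def IsStrongOn (R : V → V → Prop) (W : Set V) : Prop :=
  ∀ u ∈ W, ∀ v ∈ W, ∃ n, HasDirWalk R u v n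

/-- Directed distance `∂(u,v)`: length of a shortest directed path from `u` to `v`. -/
noncomputable def ddist (R : V → V → Prop) (u v : V) : ℕ := sInf {n | HasDirWalk R u v n}

/-- `θ(u,v) = max{∂(u,v), ∂(v,u)}`. -/
noncomputable def theta (R : V → V → Prop) (u v : V) : ℕ := max (ddist R u v) (ddist R v u)

/-- The diameter of a (strong) orientation. -/
noncomputable def diamOr [Fintype V] (R : V → V → Prop) : ℕ :=
  Finset.univ.sup fun p : V × V => theta R p.1 p.2

/-- The oriented diameter of `G`. -/
noncomputable def orientedDiam [Fintype V] (G : SimpleGraph V) : ℕ :=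
  sInf {d | ∃ R : V → V → Prop, IsOrientation G R ∧ IsStrong R ∧ diamOr R = d}

/-- `A` is the arc set of a strongly connected subdigraph of `R` containing `u` and `v`. -/
def IsStrongSubOn (R : V → V → Prop) (u v : V) (A : Set (V × V)) : Prop :=
  (∀ p ∈ A, R p.1 p.2) ∧
  (∀ x ∈ insert u (insert v (Prod.fst '' A ∪ Prod.snd '' A)),
   ∀ y ∈ insert u (insert v (Prod.fst '' A ∪ Prod.snd '' A)),
     Relation.ReflTransGen (fun a b => (a, b) ∈ A) x y)

/-- Strong distance `sd(u,v)`: minimum number of arcs of a strong subdigraph containing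
`u` and `v`. -/
noncomputable def sdist (R : V → V → Prop) (u v : V) : ℕ :=
  sInf {n | ∃ A : Set (V × V), A.Finite ∧ A.ncard = n ∧ IsStrongSubOn R u v A}

/-- The strong diameter of a (strong) orientation. -/
noncomputable def sdiamOr [Fintype V] (R : V → V → Prop) : ℕ :=
  Finset.univ.sup fun p : V × V => sdist R p.1 p.2

/-- The oriented strong diameter of `G`. -/
noncomputable def orientedSDiam [Fintype V] (G : SimpleGraph V) : ℕ :=
  sInf {d | ∃ R : V → V → Prop, IsOrientation G R ∧ IsStrong R ∧ sdiamOr R = d}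

/-- `D` is a dominating set of `G`. -/
def IsDominating (G : SimpleGraph V) (D : Set V) : Prop :=
  ∀ v ∉ D, ∃ u ∈ D, G.Adj u v

/-- The domination number of `G`. -/
noncomputable def dominationNumber [Fintype V] (G : SimpleGraph V) : ℕ :=
  sInf {n | ∃ D : Set V, D.ncard = n ∧ IsDominating G D}

/-- `v` is associated with an isolated triangle. -/
def HasIsolatedTriangle (G : SimpleGraph V) (v : V) : Prop :=
  ∃ v₁ v₂ : V, G.Adj v v₁ ∧ G.Adj v₁ v₂ ∧ G.Adj v₂ v ∧
    (G.neighborSet v₁).ncard = 2 ∧ (G.neighborSet v₂).ncard = 2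

/-- `(G, D)` is a standard pair. -/
def IsStandardPair (G : SimpleGraph V) (D : Set V) : Prop :=
  IsBridgeless G ∧
  (∀ u ∈ D, ∀ v ∈ D, ¬ G.Adj u v) ∧
  (∀ v ∉ D, ∃! u, u ∈ D ∧ G.Adj u v) ∧
  (∀ v ∈ D, HasIsolatedTriangle G v)

/-- `H` is an alternative subgraph of `G` with respect to the dominating set `D`. -/
def IsAlternative (G : SimpleGraph V) (D : Set V) (H : G.Subgraph) : Prop :=
  IsBridgeless H.coe ∧
  (H.verts ∩ D).Nonempty ∧
  (∀ x ∈ H.verts ∩ D, ∃ a b : V, a ≠ b ∧ a ∉ D ∧ b ∉ D ∧ H.Adj x a ∧ H.Adj x b ∧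
    ∀ c, c ∉ D → H.Adj x c → c = a ∨ c = b) ∧
  (∀ y ∈ H.verts, y ∉ D → ∃ x ∈ H.verts ∩ D, H.Adj x y)

/-- `d_i(H⃗)`: maximum of `θ(u,v)` over pairs `u, v ∈ W` with `|{u,v} ∩ D| = i`. -/
noncomputable def dPairs (R : V → V → Prop) (W D : Set V) (i : ℕ) : ℕ :=
  sSup {k | ∃ u ∈ W, ∃ v ∈ W, ({u, v} ∩ D).ncard = i ∧ theta R u v = k}

/-- `m(H⃗) = max{d₀ − 2, d₁ − 1, d₂}`. -/
noncomputable def mOf (R : V → V → Prop) (W D : Set V) : ℕ :=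
  max (dPairs R W D 0 - 2) (max (dPairs R W D 1 - 1) (dPairs R W D 2))

/-- The graph obtained from `G` by subdividing the edge `uv` with a new vertex `none`. -/
def subdivide (G : SimpleGraph V) (u v : V) : SimpleGraph (Option V) :=
  SimpleGraph.fromRel fun a b =>
    match a, b with
    | some x, some y => G.Adj x y ∧ ¬(x = u ∧ y = v) ∧ ¬(x = v ∧ y = u)
    | some x, none => x = u ∨ x = v
    | none, _ => False

/-- The graph obtained from `G` by attaching a pendant triangle at `v`. -/
def pendantTriangle (G : SimpleGraph V) (v : V) : SimpleGraph (V ⊕ Fin 2) :=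
  SimpleGraph.fromRel fun a b =>
    match a, b with
    | Sum.inl x, Sum.inl y => G.Adj x y
    | Sum.inl x, Sum.inr _ => x = v
    | Sum.inr _, Sum.inl _ => False
    | Sum.inr i, Sum.inr j => i ≠ j

/-- `G` has a Hamiltonian path with endpoints `u` and `v`. -/
def HasHamiltonianPathBetween (G : SimpleGraph V) (u v : V) : Prop :=
  ∃ p : G.Walk u v, p.IsPath ∧ ∀ w : V, w ∈ p.support

lemma hdw_zero (R : V → V → Prop) (u : V) : HasDirWalk R u u 0 :=
  ⟨fun _ => u, rfl, rfl, fun i => i.elim0⟩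

lemma hdw_zero_eq {R : V → V → Prop} {u v : V} (h : HasDirWalk R u v 0) : u = v := by
  obtain ⟨f, h0, hl, _⟩ := h
  rw [← h0, ← hl]; rfl

lemma hdw_cons {R : V → V → Prop} {u x v : V} {n : ℕ} (h : R u x)
    (hw : HasDirWalk R x v n) : HasDirWalk R u v (n + 1) := by
  obtain ⟨g, g0, gl, gs⟩ := hw
  have hlast : (Fin.last (n + 1)) = (Fin.last n).succ := (Fin.succ_last n).symm
  refine ⟨Fin.cases u g, Fin.cases_zero .., by rw [hlast]; exact gl, fun i => ?_⟩
  refine Fin.cases ?_ (fun j => ?_) i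
  · have h0 : (1 : Fin (n+2)) = (0 : Fin (n+1)).succ := (Fin.succ_zero_eq_one).symm
    simp only [Fin.castSucc_zero, Fin.cases_zero, h0, Fin.cases_succ, g0]
    exact h
  · have h1 : (j.succ : Fin (n+1)).castSucc = (j.castSucc).succ := (Fin.succ_castSucc j).symm
    rw [h1]
    simpa using gs j

lemma hdw_one {R : V → V → Prop} {u v : V} (h : R u v) : HasDirWalk R u v 1 :=
  hdw_cons h (hdw_zero R v)

lemma hdw_uncons {R : V → V → Prop} {u v : V} {n : ℕ} (h : HasDirWalk R u v (n + 1)) :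
    ∃ x, R u x ∧ HasDirWalk R x v n := by
  obtain ⟨f, f0, fl, fs⟩ := h
  refine ⟨f 1, ?_, fun i => f i.succ, rfl, ?_, fun i => ?_⟩
  · have := fs 0
    simpa [f0] using this
  · show f (Fin.last n).succ = v
    rw [Fin.succ_last]; exact fl
  · have := fs i.succ
    rw [← Fin.succ_castSucc] at this
    exact this

lemma hdw_trans {R : V → V → Prop} {u v w : V} {m n : ℕ} (h1 : HasDirWalk R u v m)
    (h2 : HasDirWalk R v w n) : HasDirWalk R u w (m + n) := by
  induction m generalizing u with
  | zero => rw [hdw_zero_eq h1]; simpa using h2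
  | succ k ih =>
    obtain ⟨x, hux, hx⟩ := hdw_uncons h1
    have : k + 1 + n = (k + n) + 1 := by omega
    rw [this]
    exact hdw_cons hux (ih hx)

lemma dist_pred (H : SimpleGraph W) {u r : W} (p : H.Walk u r)
    (hp : p.length = H.dist u r) (hpos : 0 < H.dist u r) :
    ∃ x, H.Adj u x ∧ H.dist x r + 1 = H.dist u r := by
  cases p with
  | nil => simp at hp hpos
  | @cons _ x _ hadj q =>
    refine ⟨x, hadj, ?_⟩
    have hle : H.dist x r ≤ H.dist u r - 1 := by
      have := H.dist_le q
      simp [SimpleGraph.Walk.length_cons] at hp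
      omega
    have hge : H.dist u r ≤ H.dist x r + 1 := by
      obtain ⟨q', hq'⟩ := SimpleGraph.Reachable.exists_walk_length_eq_dist (Nonempty.intro q)
      have := H.dist_le (SimpleGraph.Walk.cons hadj q')
      simpa [SimpleGraph.Walk.length_cons, hq'] using this
    omega

lemma exists_level (H : SimpleGraph W) (hni : ∀ u : W, ∃ w, H.Adj u w) :
    ∃ ℓ : W → ℕ, ∀ u : W, ∃ w, H.Adj u w ∧ ℓ w % 2 ≠ ℓ u % 2 := by
  classical
  set root : W → W := fun u => (H.connectedComponentMk u).out with hroot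
  have hrootadj : ∀ {u w : W}, H.Adj u w → root w = root u := by
    intro u w h
    simp only [hroot]
    rw [SimpleGraph.ConnectedComponent.sound h.symm.reachable]
  have hreach : ∀ u : W, H.Reachable u (root u) := by
    intro u
    have : H.connectedComponentMk (root u) = H.connectedComponentMk u := by
      simp only [hroot]
      exact (H.connectedComponentMk u).out_eq
    exact (SimpleGraph.ConnectedComponent.exact this).symm
  refine ⟨fun u => H.dist u (root u), fun u => ?_⟩
  rcases Nat.eq_zero_or_pos (H.dist u (root u)) with h0 | hpos
  · -- u = root u
    have hu : u = root u := ((hreach u).dist_eq_zero_iff).mp h0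
    obtain ⟨w, hw⟩ := hni u
    refine ⟨w, hw, ?_⟩
    show H.dist w (root w) % 2 ≠ H.dist u (root u) % 2
    have h1 : H.dist w (root w) = 1 := by
      rw [hrootadj hw, ← hu]
      have hle : H.dist w u ≤ 1 := by
        simpa using H.dist_le (SimpleGraph.Walk.cons hw.symm SimpleGraph.Walk.nil)
      have hne : H.dist w u ≠ 0 := fun h =>
        hw.ne' (((hw.symm.reachable).dist_eq_zero_iff).mp h)
      omega
    rw [h1, h0]
    omega
  · obtain ⟨p, hp⟩ := (hreach u).exists_walk_length_eq_dist
    obtain ⟨x, hadj, hx⟩ := dist_pred H p hp hpos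
    refine ⟨x, hadj, ?_⟩
    show H.dist x (root x) % 2 ≠ H.dist u (root u) % 2
    rw [hrootadj hadj]
    omega

lemma neighbor_exists {G : SimpleGraph V} (hbr : IsBridgeless G) {u d : V} (h : G.Adj u d) :
    ∃ w, w ≠ d ∧ G.Adj u w := by
  have hnb := hbr s(u, d)
  rw [SimpleGraph.isBridge_iff] at hnb
  push_neg at hnb
  have hreach := hnb
  rw [SimpleGraph.reachable_delete_edges_iff_exists_walk] at hreach
  obtain ⟨p, hp⟩ := hreach
  cases p with
  | nil => exact absurd rfl h.ne
  | @cons _ w _ hadj q =>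
    refine ⟨w, fun hwd => hp ?_, hadj⟩
    subst hwd
    simp [SimpleGraph.Walk.edges_cons]

/-- A standard pair with `|D| = 1` admits a strong orientation with
diameter at most 4. -/
theorem diam_le_four_of_domination_one {V : Type*} [Fintype V]
    (G : SimpleGraph V) (D : Set V) (hstd : IsStandardPair G D)
    (hD : D.ncard = 1) :
    ∃ R : V → V → Prop, IsOrientation G R ∧ IsStrong R ∧ diamOr R ≤ 4 := by
  classical
  obtain ⟨d, rfl⟩ := Set.ncard_eq_one.mp hD
  obtain ⟨hbr, _, hdom, _⟩ := hstd
  -- every vertex ≠ d is adjacent to d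
  have hAdjd : ∀ u : V, u ≠ d → G.Adj d u := by
    intro u hu
    obtain ⟨x, ⟨hx, hadj⟩, _⟩ := hdom u (by simpa using hu)
    rwa [Set.mem_singleton_iff.mp hx] at hadj
  -- the induced graph on V \ {d} has no isolated vertices
  set H : SimpleGraph {v : V // v ≠ d} := G.comap Subtype.val with hH
  have hni : ∀ u : {v : V // v ≠ d}, ∃ w, H.Adj u w := by
    rintro ⟨u, hu⟩
    obtain ⟨w, hwd, hadj⟩ := neighbor_exists hbr (hAdjd u hu).symm
    exact ⟨⟨w, hwd⟩, hadj⟩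
  obtain ⟨ℓ, hℓ⟩ := exists_level H hni
  -- levels extended to V
  set L : V → ℕ := fun v => if h : v ≠ d then ℓ ⟨v, h⟩ else 0 with hLdef
  have hmate : ∀ u : V, u ≠ d → ∃ w, w ≠ d ∧ G.Adj u w ∧ L w % 2 ≠ L u % 2 := by
    intro u hu
    obtain ⟨⟨w, hwd⟩, hadj, hpar⟩ := hℓ ⟨u, hu⟩
    refine ⟨w, hwd, hadj, ?_⟩
    simp only [hLdef, dif_pos hwd, dif_pos hu]
    exact hpar
  set eV : V → ℕ := fun v => ((Fintype.equivFin V) v : ℕ) with heV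
  have heVinj : ∀ u v : V, eV u = eV v → u = v := by
    intro u v h
    exact (Fintype.equivFin V).injective (Fin.val_injective h)
  -- the orientation
  set R : V → V → Prop := fun u v => G.Adj u v ∧
    ((u = d ∧ L v % 2 = 1) ∨ (v = d ∧ L u % 2 = 0) ∨
     (u ≠ d ∧ v ≠ d ∧ L u % 2 = 1 ∧ L v % 2 = 0) ∨
     (u ≠ d ∧ v ≠ d ∧ L u % 2 = L v % 2 ∧ eV u < eV v)) with hR
  have hL2 : ∀ v, L v % 2 = 0 ∨ L v % 2 = 1 := fun v => Nat.mod_two_eq_zero_or_one (L v)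
  have hOr : IsOrientation G R := by
    refine ⟨fun u v h => h.1, ?_, ?_⟩
    · intro u v hadj
      by_cases hu : u = d
      · rcases hL2 v with h | h
        · exact Or.inr ⟨hadj.symm, Or.inr (Or.inl ⟨hu, h⟩)⟩
        · exact Or.inl ⟨hadj, Or.inl ⟨hu, h⟩⟩
      by_cases hv : v = d
      · rcases hL2 u with h | h
        · exact Or.inl ⟨hadj, Or.inr (Or.inl ⟨hv, h⟩)⟩
        · exact Or.inr ⟨hadj.symm, Or.inl ⟨hv, h⟩⟩
      by_cases hpar : L u % 2 = L v % 2
      · rcases Nat.lt_or_ge (eV u) (eV v) with hlt | hge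
        · exact Or.inl ⟨hadj, Or.inr (Or.inr (Or.inr ⟨hu, hv, hpar, hlt⟩))⟩
        · have hne : eV v ≠ eV u := fun h => hadj.ne' (heVinj v u h)
          exact Or.inr ⟨hadj.symm, Or.inr (Or.inr (Or.inr
            ⟨hv, hu, hpar.symm, lt_of_le_of_ne hge hne⟩))⟩
      · rcases hL2 u with h1 | h1 <;> rcases hL2 v with h2 | h2
        · omega
        · exact Or.inr ⟨hadj.symm, Or.inr (Or.inr (Or.inl ⟨hv, hu, h2, h1⟩))⟩
        · exact Or.inl ⟨hadj, Or.inr (Or.inr (Or.inl ⟨hu, hv, h1, h2⟩))⟩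
        · omega
    · rintro u v ⟨hadj, h1⟩ ⟨hadj2, h2⟩
      by_cases hu : u = d
      · have e1 : L v % 2 = 1 := by
          rcases h1 with ⟨_, h⟩ | ⟨h, _⟩ | ⟨h, _⟩ | ⟨h, _⟩
          · exact h
          · exact absurd (h.trans hu.symm) hadj.ne'
          · exact absurd hu h
          · exact absurd hu h
        have e2 : L v % 2 = 0 := by
          rcases h2 with ⟨h, _⟩ | ⟨_, h⟩ | ⟨_, h, _⟩ | ⟨_, h, _⟩
          · exact absurd (h.trans hu.symm) hadj.ne'
          · exact h
          · exact absurd hu h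
          · exact absurd hu h
        omega
      by_cases hv : v = d
      · have e1 : L u % 2 = 0 := by
          rcases h1 with ⟨h, _⟩ | ⟨_, h⟩ | ⟨_, h, _⟩ | ⟨_, h, _⟩
          · exact absurd h hu
          · exact h
          · exact absurd hv h
          · exact absurd hv h
        have e2 : L u % 2 = 1 := by
          rcases h2 with ⟨_, h⟩ | ⟨h, _⟩ | ⟨h, _⟩ | ⟨h, _⟩
          · exact h
          · exact absurd h hu
          · exact absurd hv h
          · exact absurd hv h
        omega
      · rcases h1 with ⟨h, _⟩ | ⟨h, _⟩ | ⟨_, _, hb, hb'⟩ | ⟨_, _, hb, hb'⟩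
        · exact absurd h hu
        · exact absurd h hv
        · rcases h2 with ⟨h, _⟩ | ⟨h, _⟩ | ⟨_, _, hc, hc'⟩ | ⟨_, _, hc, hc'⟩
          · exact absurd h hv
          · exact absurd h hu
          · omega
          · omega
        · rcases h2 with ⟨h, _⟩ | ⟨h, _⟩ | ⟨_, _, hc, hc'⟩ | ⟨_, _, hc, hc'⟩
          · exact absurd h hv
          · exact absurd h hu
          · omega
          · omega
  -- short walks to and from d
  have hToD : ∀ u : V, u ≠ d → ∃ n ≤ 2, HasDirWalk R u d n := by
    intro u hu
    rcases hL2 u with h | h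
    · exact ⟨1, by omega, hdw_one ⟨(hAdjd u hu).symm, Or.inr (Or.inl ⟨rfl, h⟩)⟩⟩
    · obtain ⟨w, hwd, hadj, hpar⟩ := hmate u hu
      have hw0 : L w % 2 = 0 := by rcases hL2 w with h' | h' <;> omega
      refine ⟨2, le_refl 2, hdw_cons ⟨hadj, Or.inr (Or.inr (Or.inl ⟨hu, hwd, h, hw0⟩))⟩
        (hdw_one ⟨(hAdjd w hwd).symm, Or.inr (Or.inl ⟨rfl, hw0⟩)⟩)⟩
  have hFromD : ∀ u : V, u ≠ d → ∃ n ≤ 2, HasDirWalk R d u n := by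
    intro u hu
    rcases hL2 u with h | h
    · obtain ⟨w, hwd, hadj, hpar⟩ := hmate u hu
      have hw1 : L w % 2 = 1 := by rcases hL2 w with h' | h' <;> omega
      refine ⟨2, le_refl 2, hdw_cons ⟨hAdjd w hwd, Or.inl ⟨rfl, hw1⟩⟩
        (hdw_one ⟨hadj.symm, Or.inr (Or.inr (Or.inl ⟨hwd, hu, hw1, h⟩))⟩)⟩
    · exact ⟨1, by omega, hdw_one ⟨hAdjd u hu, Or.inl ⟨rfl, h⟩⟩⟩
  have hWalk : ∀ u v : V, ∃ n ≤ 4, HasDirWalk R u v n := by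
    intro u v
    by_cases huv : u = v
    · exact ⟨0, by omega, huv ▸ hdw_zero R u⟩
    by_cases hu : u = d
    · subst hu
      obtain ⟨n, hn, hw⟩ := hFromD v (fun h => huv h.symm)
      exact ⟨n, by omega, hw⟩
    by_cases hv : v = d
    · subst hv
      obtain ⟨n, hn, hw⟩ := hToD u hu
      exact ⟨n, by omega, hw⟩
    · obtain ⟨n1, hn1, hw1⟩ := hToD u hu
      obtain ⟨n2, hn2, hw2⟩ := hFromD v hv
      exact ⟨n1 + n2, by omega, hdw_trans hw1 hw2⟩
  refine ⟨R, hOr, fun u v => (hWalk u v).imp (fun n h => h.2), ?_⟩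
  apply Finset.sup_le
  rintro ⟨u, v⟩ -
  have hdd : ∀ a b : V, ddist R a b ≤ 4 := by
    intro a b
    obtain ⟨n, hn, hw⟩ := hWalk a b
    exact le_trans (Nat.sInf_le hw) hn
  exact max_le (hdd u v) (hdd v u)
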